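/- Let J ≥ 1, let γ ∈ (0,1), let q_y > 0 for every nonzero profile y ∈ {0,1}^J \ {0}, and let δ ≥ 0. If the highest-order interaction coefficient is bounded, i.e., | ∑_{y ≠ 0} (−1)^{J + |y|} log(q_y · γ) + (−1)^J log(1 − γ) | ≤ δ, then 1 + exp(S(q) − δ) ≤ 1/γ ≤ 1 + exp(S(q) + δ), where S(q) = ∑_{y ≠ 0} (−1)^{|y|+1} log q_y. -/

import Mathlib

open Finset

lemma sum_neg_one_pow_card (J : ℕ) (hJ : 1 ≤ J) :
    ∑ y : Fin J → Bool, (-1 : ℝ) ^ ((Finset.univ.filter (fun k => y k = true)).card) = 0 := by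
  have key : ∀ y : Fin J → Bool,
      (-1 : ℝ) ^ ((Finset.univ.filter (fun k => y k = true)).card)
        = ∏ k : Fin J, (if y k = true then (-1 : ℝ) else 1) := by
    intro y
    rw [Finset.prod_ite, Finset.prod_const, Finset.prod_const, one_pow, mul_one]
  simp_rw [key]
  rw [← Fintype.prod_sum (fun (_ : Fin J) (b : Bool) => if b = true then (-1 : ℝ) else 1)]
  have : ∀ k : Fin J, (∑ b : Bool, if b = true then (-1 : ℝ) else 1) = 0 := by
    intro k; simp
  rw [Finset.prod_congr rfl (fun k _ => this k), Finset.prod_const,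
    Finset.card_univ, Fintype.card_fin]
  exact zero_pow (by omega)

/-- if the highest-order interaction coefficient is bounded,
`|∑_{y ≠ 0} (−1)^{J+|y|} log(q_y γ) + (−1)^J log(1−γ)| ≤ δ`, then
`1 + exp(S(q) − δ) ≤ 1/γ ≤ 1 + exp(S(q) + δ)` where
`S(q) = ∑_{y ≠ 0} (−1)^{|y|+1} log q_y`. -/
theorem stmt_13 (J : ℕ) (hJ : 1 ≤ J) (γ : ℝ) (hγ0 : 0 < γ) (hγ1 : γ < 1)
    (q : (Fin J → Bool) → ℝ)
    (hq : ∀ y : Fin J → Bool, y ≠ (fun _ => false) → 0 < q y)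
    (δ : ℝ) (hδ : 0 ≤ δ)
    (h : |∑ y ∈ Finset.univ.filter (fun y : Fin J → Bool => y ≠ fun _ => false),
          (-1 : ℝ) ^ (J + (Finset.univ.filter (fun k => y k = true)).card)
            * Real.log (q y * γ)
        + (-1 : ℝ) ^ J * Real.log (1 - γ)| ≤ δ) :
    1 + Real.exp ((∑ y ∈ Finset.univ.filter (fun y : Fin J → Bool => y ≠ fun _ => false),
        (-1 : ℝ) ^ ((Finset.univ.filter (fun k => y k = true)).card + 1) * Real.log (q y)) - δ)
      ≤ 1 / γ ∧
    1 / γ ≤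
      1 + Real.exp ((∑ y ∈ Finset.univ.filter (fun y : Fin J → Bool => y ≠ fun _ => false),
        (-1 : ℝ) ^ ((Finset.univ.filter (fun k => y k = true)).card + 1) * Real.log (q y)) + δ) := by
  set s := Finset.univ.filter (fun y : Fin J → Bool => y ≠ fun _ => false) with hs
  set c : (Fin J → Bool) → ℕ := fun y => (Finset.univ.filter (fun k => y k = true)).card with hc
  set S : ℝ := ∑ y ∈ s, (-1 : ℝ) ^ (c y + 1) * Real.log (q y) with hS
  -- sum of (-1)^(c y) over s is -1
  have hfilter : ∑ y ∈ s, (-1 : ℝ) ^ (c y) = -1 := by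
    have h0 : (Finset.univ : Finset (Fin J → Bool)) =
        insert (fun _ => false) s := by
      rw [hs]
      ext y
      by_cases hy : y = fun _ => false <;> simp [hy]
    have := sum_neg_one_pow_card J hJ
    rw [h0, Finset.sum_insert (by simp [hs])] at this
    simp only [hc]
    norm_num at this
    linarith
  -- rewrite the hypothesis sum
  have hx : (1 - γ) / γ > 0 := div_pos (by linarith) hγ0
  have key : ∑ y ∈ s, (-1 : ℝ) ^ (J + c y) * Real.log (q y * γ)
        + (-1 : ℝ) ^ J * Real.log (1 - γ)
      = (-1 : ℝ) ^ J * (Real.log ((1 - γ) / γ) - S) := by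
    have hlogq : ∀ y ∈ s, Real.log (q y * γ) = Real.log (q y) + Real.log γ := by
      intro y hy
      exact Real.log_mul (ne_of_gt (hq y (by simpa [hs] using hy))) (ne_of_gt hγ0)
    rw [Finset.sum_congr rfl (fun y hy => by rw [hlogq y hy, pow_add])]
    have expand : ∑ y ∈ s, (-1 : ℝ) ^ J * (-1 : ℝ) ^ (c y) * (Real.log (q y) + Real.log γ)
        = (-1 : ℝ) ^ J * ((∑ y ∈ s, (-1 : ℝ) ^ (c y) * Real.log (q y))
            + (∑ y ∈ s, (-1 : ℝ) ^ (c y)) * Real.log γ) := by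
      simp only [mul_add, Finset.mul_sum, Finset.sum_mul, ← Finset.sum_add_distrib]
      apply Finset.sum_congr rfl
      intro y hy
      ring
    rw [expand, hfilter]
    have hSneg : ∑ y ∈ s, (-1 : ℝ) ^ (c y) * Real.log (q y) = -S := by
      have h1 : ∀ y ∈ s, (-1 : ℝ) ^ (c y) * Real.log (q y)
          = -((-1 : ℝ) ^ (c y + 1) * Real.log (q y)) := by
        intro y hy; rw [pow_succ]; ring
      rw [Finset.sum_congr rfl h1, Finset.sum_neg_distrib, hS]
    rw [hSneg, Real.log_div (ne_of_gt (by linarith)) (ne_of_gt hγ0)]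
    ring
  rw [key] at h
  have habs : |Real.log ((1 - γ) / γ) - S| ≤ δ := by
    rwa [abs_mul, abs_pow, abs_neg, abs_one, one_pow, one_mul] at h
  rw [abs_le] at habs
  have hlog1 : S - δ ≤ Real.log ((1 - γ) / γ) := by linarith [habs.1]
  have hlog2 : Real.log ((1 - γ) / γ) ≤ S + δ := by linarith [habs.2]
  have hexp : Real.exp (Real.log ((1 - γ) / γ)) = (1 - γ) / γ := Real.exp_log hx
  have hinv : 1 / γ = 1 + (1 - γ) / γ := by field_simp; ring
  constructor
  · rw [hinv]
    have := Real.exp_le_exp.mpr hlog1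
    rw [hexp] at this
    linarith
  · rw [hinv]
    have := Real.exp_le_exp.mpr hlog2
    rw [hexp] at this
    linarith
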